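/- (Conditional limit for the logistic inverted bivariate extreme value distribution.) Let α ∈ (0,1) and let (X,Y) be a random vector with X, Y ≥ 0 almost surely and joint survivor function P(X > x, Y > y) = exp{−(x^{1/α} + y^{1/α})^α} for all x, y ≥ 0. Then for every x ≥ 0, lim_{n→∞} P( X > x·(log n)^{1−α} | Y > log n ) = exp{−α x^{1/α}}. -/

import Mathlib

open MeasureTheory Filter

lemma slope_tendsto_aux (α : ℝ) :
    Tendsto (fun h : ℝ => ((1 + h) ^ α - 1) / h) (nhdsWithin 0 {0}ᶜ) (nhds α) := by
  have hd : HasDerivAt (fun y : ℝ => y ^ α) (α * (1:ℝ) ^ (α - 1)) 1 :=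
    Real.hasDerivAt_rpow_const (Or.inl one_ne_zero)
  have h1 := hasDerivAt_iff_tendsto_slope.mp hd
  have hmap : Tendsto (fun h : ℝ => 1 + h) (nhdsWithin 0 {0}ᶜ) (nhdsWithin 1 {1}ᶜ) := by
    rw [tendsto_nhdsWithin_iff]
    constructor
    · have : Tendsto (fun h : ℝ => 1 + h) (nhds 0) (nhds 1) := by
        have h0 := (continuous_add_left (1:ℝ)).tendsto (0:ℝ)
        rwa [add_zero] at h0
      exact this.mono_left nhdsWithin_le_nhds
    · filter_upwards [self_mem_nhdsWithin] with h hh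
      simpa using hh
  have h2 := h1.comp hmap
  simp only [Real.one_rpow, mul_one] at h2
  refine h2.congr ?_
  intro h
  simp [slope, Function.comp, Real.one_rpow, div_eq_inv_mul]

lemma aux_tendsto (α c : ℝ) (hc : 0 ≤ c) :
    Tendsto (fun t : ℝ => t * ((1 + c / t) ^ α - 1)) atTop (nhds (α * c)) := by
  rcases eq_or_lt_of_le hc with rfl | hc
  · simpa using (tendsto_const_nhds : Tendsto (fun _ : ℝ => (0:ℝ)) atTop (nhds 0))
  · have h1 : Tendsto (fun t : ℝ => c / t) atTop (nhdsWithin 0 {0}ᶜ) := by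
      rw [tendsto_nhdsWithin_iff]
      constructor
      · exact tendsto_const_nhds.div_atTop tendsto_id
      · filter_upwards [eventually_gt_atTop 0] with t ht
        exact (div_pos hc ht).ne'
    have h2 := (slope_tendsto_aux α).comp h1
    have h3 := h2.const_mul c
    refine Tendsto.congr' ?_ (by simpa [mul_comm] using h3)
    filter_upwards [eventually_gt_atTop 0] with t ht
    have hcne : c ≠ 0 := hc.ne'
    field_simp [Function.comp]

/-- conditional limit for the logistic inverted bivariate extreme value
distribution: for `α ∈ (0,1)`, `P(X > x(log n)^{1-α} | Y > log n) → exp{−αx^{1/α}}`. -/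
theorem logistic_inverted_BEV_conditional_limit
    {Ω : Type*} [MeasurableSpace Ω] (μ : Measure Ω) [IsProbabilityMeasure μ]
    (X Y : Ω → ℝ)
    (hX : ∀ᵐ a ∂μ, 0 ≤ X a) (hY : ∀ᵐ a ∂μ, 0 ≤ Y a)
    (α : ℝ) (hα : α ∈ Set.Ioo (0:ℝ) 1)
    (hXmarg : ∀ x ≥ (0:ℝ), (μ {a | X a > x}).toReal = Real.exp (-x))
    (hYmarg : ∀ y ≥ (0:ℝ), (μ {a | Y a > y}).toReal = Real.exp (-y))
    (hsurv : ∀ x ≥ (0:ℝ), ∀ y ≥ (0:ℝ),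
      (μ {a | X a > x ∧ Y a > y}).toReal =
        Real.exp (-(x ^ (1 / α) + y ^ (1 / α)) ^ α)) :
    ∀ x ≥ (0:ℝ),
      Tendsto
        (fun n : ℕ =>
          (μ {a | X a > x * (Real.log n) ^ (1 - α) ∧ Y a > Real.log n}).toReal /
            (μ {a | Y a > Real.log n}).toReal)
        atTop (nhds (Real.exp (-(α * x ^ (1 / α))))) := by
  obtain ⟨hα0, hα1⟩ := hα
  intro x hx
  set c : ℝ := x ^ (1 / α) with hcdef
  have hc : 0 ≤ c := Real.rpow_nonneg hx _
  have key : Tendsto (fun t : ℝ => Real.exp (-(t * ((1 + c / t) ^ α - 1)))) atTop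
      (nhds (Real.exp (-(α * c)))) :=
    (Real.continuous_exp.tendsto _).comp ((aux_tendsto α c hc).neg)
  have hlog : Tendsto (fun n : ℕ => Real.log n) atTop atTop :=
    Real.tendsto_log_atTop.comp tendsto_natCast_atTop_atTop
  refine Tendsto.congr' ?_ (key.comp hlog)
  filter_upwards [hlog.eventually (eventually_gt_atTop 0)] with n ht
  set t : ℝ := Real.log n with htdef
  have hxt : (0:ℝ) ≤ x * t ^ (1 - α) := mul_nonneg hx (Real.rpow_nonneg ht.le _)
  have hsum : (x * t ^ (1 - α)) ^ (1 / α) + t ^ (1 / α) = t ^ (1 / α) * (1 + c / t) := by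
    rw [Real.mul_rpow hx (Real.rpow_nonneg ht.le _), ← Real.rpow_mul ht.le]
    have h : (1 - α) * (1 / α) = 1 / α - 1 := by field_simp
    rw [h, Real.rpow_sub ht, Real.rpow_one]
    field_simp
    ring
  have hpow : ((x * t ^ (1 - α)) ^ (1 / α) + t ^ (1 / α)) ^ α = t * (1 + c / t) ^ α := by
    have h1 : (0:ℝ) < 1 + c / t := by positivity
    rw [hsum, Real.mul_rpow (Real.rpow_nonneg ht.le _) h1.le, ← Real.rpow_mul ht.le,
      one_div_mul_cancel hα0.ne', Real.rpow_one]
  simp only [Function.comp]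
  rw [hsurv _ hxt _ ht.le, hYmarg _ ht.le, hpow, ← Real.exp_sub]
  congr 1
  ring
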